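/- Let λ ∈ ℝ, a > 0, and let α : ℝ → ℝ be a smooth function all of whose derivatives have at most polynomial growth, with α(x) ≥ a for all x ∈ ℝ. Let u : [0,∞) → 𝓢(ℝ;ℂ) be a curve of Schwartz functions such that for every t ≥ 0 the map t ↦ u(t), regarded as a curve in L²(ℝ;ℂ), is differentiable at t with derivative equal to (the L² class of) the Schwartz function i·u(t)'' + iλ·|u(t)|²·u(t) − α·u(t). Then for all t ≥ 0: (∫_ℝ|u(t)(x)|²dx)^{1/2} ≤ e^{−at}·(∫_ℝ|u(0)(x)|²dx)^{1/2}. -/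

import Mathlib

open MeasureTheory Complex Filter


lemma schwartz_bdd (v : SchwartzMap ℝ ℂ) : ∃ C, ∀ x, ‖v x‖ ≤ C := by
  obtain ⟨C, -, hC⟩ := v.decay 0 0
  exact ⟨C, fun x => by simpa using hC x⟩


lemma schwartz_deriv1 (v : SchwartzMap ℝ ℂ) :
    deriv (v : ℝ → ℂ) = ⇑(SchwartzMap.derivCLM ℝ ℂ v) :=
  (funext fun x => SchwartzMap.derivCLM_apply (𝕜 := ℝ) v x).symm

lemma schwartz_deriv2 (v : SchwartzMap ℝ ℂ) :
    deriv (deriv (v : ℝ → ℂ)) = ⇑(SchwartzMap.derivCLM ℝ ℂ (SchwartzMap.derivCLM ℝ ℂ v)) := by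
  rw [schwartz_deriv1, schwartz_deriv1]

lemma schwartz_norm_sq_integrable (v : SchwartzMap ℝ ℂ) :
    Integrable (fun x => ‖v x‖ ^ 2) (volume : Measure ℝ) := by
  obtain ⟨C, hC⟩ := schwartz_bdd v
  have h : Integrable (fun x => ‖v x‖ * ‖v x‖) (volume : Measure ℝ) :=
    v.integrable.norm.bdd_mul v.continuous.norm.aestronglyMeasurable
      (c := C) (Filter.Eventually.of_forall fun x => by simpa [Real.norm_eq_abs, _root_.abs_of_nonneg (norm_nonneg _)] using hC x)
  simpa [sq] using h

lemma lp_norm_sq (v : SchwartzMap ℝ ℂ) (Uv : Lp ℂ 2 (volume : Measure ℝ))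
    (hUv : (Uv : ℝ → ℂ) =ᵐ[volume] v) : ‖Uv‖ ^ 2 = ∫ x, ‖v x‖ ^ 2 := by
  have h1 : (inner ℂ Uv Uv : ℂ) = ∫ x, (RCLike.ofReal (‖v x‖ ^ 2) : ℂ) := by
    rw [L2.inner_def]
    apply integral_congr_ae
    filter_upwards [hUv] with x hx
    rw [RCLike.inner_apply, hx, mul_comm, RCLike.conj_mul, RCLike.ofReal_pow]
  have h2 : RCLike.re (inner ℂ Uv Uv : ℂ) = ‖Uv‖ ^ 2 := inner_self_eq_norm_sq Uv
  rw [← h2, h1, ← integral_re ((schwartz_norm_sq_integrable v).ofReal (𝕜 := ℂ))]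
  simp [← Complex.ofReal_pow]


lemma bdd_mul_schwartz (f : ℝ → ℂ) (hf : AEStronglyMeasurable f volume) (C : ℝ)
    (hC : ∀ x, ‖f x‖ ≤ C) (g : SchwartzMap ℝ ℂ) :
    Integrable (fun x => f x * g x) := g.integrable.bdd_mul hf (Filter.Eventually.of_forall hC)

lemma integral_deriv_zero (h h' : ℝ → ℂ)
    (hd : ∀ x, HasDerivAt h (h' x) x) (hint : Integrable h')
    (htop : Tendsto h atTop (nhds 0)) (hbot : Tendsto h atBot (nhds 0)) :
    ∫ x, h' x = 0 := by
  have e1 : ∫ x in Set.Iic 0, h' x = h 0 - 0 :=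
    integral_Iic_of_hasDerivAt_of_tendsto' (fun x _ => hd x) hint.integrableOn hbot
  have e2 : ∫ x in Set.Ioi 0, h' x = 0 - h 0 :=
    integral_Ioi_of_hasDerivAt_of_tendsto' (fun x _ => hd x) hint.integrableOn htop
  rw [← intervalIntegral.integral_Iic_add_Ioi hint.integrableOn hint.integrableOn, e1, e2]
  ring

lemma schwartz_ibp (v : SchwartzMap ℝ ℂ) :
    ∫ x, (starRingEnd ℂ) (deriv (deriv v) x) * v x
      = - ∫ x, ((‖deriv (v : ℝ → ℂ) x‖ : ℝ) : ℂ) ^ 2 := by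
  set w := SchwartzMap.derivCLM ℝ ℂ v with hw
  set w2 := SchwartzMap.derivCLM ℝ ℂ w with hw2
  have hwv : ⇑w = deriv (v : ℝ → ℂ) := funext fun x => SchwartzMap.derivCLM_apply (𝕜 := ℝ) v x
  have hw2v : ⇑w2 = deriv (deriv (v : ℝ → ℂ)) := by
    rw [← hwv]; exact funext fun x => SchwartzMap.derivCLM_apply (𝕜 := ℝ) w x
  -- derivatives
  have hdw : ∀ x, HasDerivAt (fun y => (starRingEnd ℂ) (w y)) ((starRingEnd ℂ) (w2 x)) x := by
    intro x
    have h1 : HasDerivAt w (w2 x) x := by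
      have := w.differentiableAt (x := x) |>.hasDerivAt
      rwa [show deriv (w : ℝ → ℂ) x = w2 x from (SchwartzMap.derivCLM_apply (𝕜 := ℝ) w x).symm] at this
    simpa [Function.comp_def] using (Complex.conjCLE.hasFDerivAt.comp_hasDerivAt x h1)
  have hdv : ∀ x, HasDerivAt (v : ℝ → ℂ) (w x) x := by
    intro x
    have := v.differentiableAt (x := x) |>.hasDerivAt
    rwa [show deriv (v : ℝ → ℂ) x = w x from (SchwartzMap.derivCLM_apply (𝕜 := ℝ) v x).symm] at this
  have hprod : ∀ x, HasDerivAt (fun y => (starRingEnd ℂ) (w y) * v y)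
      ((starRingEnd ℂ) (w2 x) * v x + (starRingEnd ℂ) (w x) * w x) x :=
    fun x => (hdw x).mul (hdv x)
  -- integrability
  obtain ⟨C2, hC2⟩ := schwartz_bdd w2
  obtain ⟨C1, hC1⟩ := schwartz_bdd w
  have meas2 : AEStronglyMeasurable (fun x => (starRingEnd ℂ) (w2 x)) volume :=
    (Complex.continuous_conj.comp w2.continuous).aestronglyMeasurable
  have meas1 : AEStronglyMeasurable (fun x => (starRingEnd ℂ) (w x)) volume :=
    (Complex.continuous_conj.comp w.continuous).aestronglyMeasurable
  have int1 : Integrable (fun x => (starRingEnd ℂ) (w2 x) * v x) :=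
    bdd_mul_schwartz _ meas2 C2 (fun x => by simpa using hC2 x) v
  have int2 : Integrable (fun x => (starRingEnd ℂ) (w x) * w x) :=
    bdd_mul_schwartz _ meas1 C1 (fun x => by simpa using hC1 x) w
  have hint : Integrable (fun x => (starRingEnd ℂ) (w2 x) * v x + (starRingEnd ℂ) (w x) * w x) :=
    int1.add int2
  -- limits
  have hcoc : Tendsto (fun y => (starRingEnd ℂ) (w y) * v y) (cocompact ℝ) (nhds 0) := by
    have h1 : Tendsto (fun y => (starRingEnd ℂ) (w y)) (cocompact ℝ) (nhds 0) := by
      have := (Complex.continuous_conj.tendsto 0).comp (zero_at_infty w)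
      simpa [Function.comp_def] using this
    simpa using h1.mul (zero_at_infty v)
  rw [cocompact_eq_atBot_atTop] at hcoc
  have hzero : ∫ x, ((starRingEnd ℂ) (w2 x) * v x + (starRingEnd ℂ) (w x) * w x) = 0 :=
    integral_deriv_zero _ _ hprod hint (hcoc.mono_left le_sup_right) (hcoc.mono_left le_sup_left)
  rw [integral_add int1 int2] at hzero
  have hconj : ∀ x, (starRingEnd ℂ) (w x) * w x = ((‖deriv (v : ℝ → ℂ) x‖ : ℝ) : ℂ) ^ 2 := by
    intro x
    rw [RCLike.conj_mul, hwv]; norm_cast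
  rw [← hw2v]
  rw [show (fun x => ((‖deriv (v : ℝ → ℂ) x‖ : ℝ) : ℂ) ^ 2) = fun x => (starRingEnd ℂ) (w x) * w x
    from funext fun x => (hconj x).symm]
  linear_combination hzero
lemma pointwise_re (lam al : ℝ) (z c : ℂ) :
    ((starRingEnd ℂ) (Complex.I * z + Complex.I * (lam : ℂ) * ((‖c‖ ^ 2 : ℝ) : ℂ) * c - (al : ℂ) * c) * c).re
      = ((starRingEnd ℂ) z * c).im - al * ‖c‖ ^ 2 := by
  simp only [Complex.sq_norm]
  simp [Complex.mul_re, Complex.mul_im, Complex.sub_re, Complex.sub_im, Complex.add_re,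
    Complex.add_im, Complex.normSq_apply]
  ring

lemma key_bound (lam a : ℝ) (α : ℝ → ℝ) (hαc : Continuous α)
    (hαa : ∀ x, a ≤ α x) (v : SchwartzMap ℝ ℂ)
    (d Uv : Lp ℂ 2 (volume : Measure ℝ))
    (hUv : (Uv : ℝ → ℂ) =ᵐ[volume] v)
    (hd : (d : ℝ → ℂ) =ᵐ[volume] fun x =>
      Complex.I * deriv (deriv (v : ℝ → ℂ)) x
        + Complex.I * (lam : ℂ) * ((‖v x‖ ^ 2 : ℝ) : ℂ) * v x - ((α x : ℝ) : ℂ) * v x) :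
    ((inner ℂ d Uv : ℂ)).re ≤ -a * ‖Uv‖ ^ 2 := by
  set D : ℝ → ℂ := fun x =>
    Complex.I * deriv (deriv (v : ℝ → ℂ)) x
      + Complex.I * (lam : ℂ) * ((‖v x‖ ^ 2 : ℝ) : ℂ) * v x - ((α x : ℝ) : ℂ) * v x with hD
  have hae : (fun x => (inner ℂ (d x) (Uv x) : ℂ)) =ᵐ[volume]
      fun x => (starRingEnd ℂ) (D x) * v x := by
    filter_upwards [hd, hUv] with x h1 h2
    rw [RCLike.inner_apply, h1, h2, mul_comm]
  have hid : (inner ℂ d Uv : ℂ) = ∫ x, (starRingEnd ℂ) (D x) * v x := by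
    rw [L2.inner_def]; exact integral_congr_ae hae
  have hint0 : Integrable (fun x => (starRingEnd ℂ) (D x) * v x) :=
    (L2.integrable_inner d Uv).congr hae
  have hre : ((inner ℂ d Uv : ℂ)).re = ∫ x, ((starRingEnd ℂ) (D x) * v x).re := by
    rw [hid]; exact (integral_re hint0).symm
  -- first piece
  obtain ⟨C2, hC2⟩ := schwartz_bdd (SchwartzMap.derivCLM ℝ ℂ (SchwartzMap.derivCLM ℝ ℂ v))
  have int1 : Integrable (fun x => (starRingEnd ℂ) (deriv (deriv (v : ℝ → ℂ)) x) * v x) := by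
    rw [schwartz_deriv2]
    exact bdd_mul_schwartz _
      (Complex.continuous_conj.comp
        (SchwartzMap.derivCLM ℝ ℂ (SchwartzMap.derivCLM ℝ ℂ v)).continuous).aestronglyMeasurable
      C2 (fun x => by simpa using hC2 x) v
  have hwint : Integrable (fun x => ((‖deriv (v : ℝ → ℂ) x‖ : ℝ) : ℂ) ^ 2) := by
    have : Integrable (fun x => ((‖deriv (v : ℝ → ℂ) x‖ ^ 2 : ℝ) : ℂ)) := by
      rw [schwartz_deriv1]
      exact (schwartz_norm_sq_integrable _).ofReal
    exact this.congr (Filter.Eventually.of_forall fun x => by push_cast; ring)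
  have hofr : (∫ x, ((‖deriv (v : ℝ → ℂ) x‖ : ℝ) : ℂ) ^ 2)
      = ((∫ x, ‖deriv (v : ℝ → ℂ) x‖ ^ 2 : ℝ) : ℂ) := by
    calc (∫ x, ((‖deriv (v : ℝ → ℂ) x‖ : ℝ) : ℂ) ^ 2)
        = ∫ x, ((‖deriv (v : ℝ → ℂ) x‖ ^ 2 : ℝ) : ℂ) :=
          integral_congr_ae (Filter.Eventually.of_forall fun x => by push_cast; ring)
      _ = _ := integral_ofReal
  have h1 : ∫ x, ((starRingEnd ℂ) (deriv (deriv (v : ℝ → ℂ)) x) * v x).im = 0 := by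
    have him := integral_im int1
    rw [schwartz_ibp v, hofr] at him
    simpa using him
  have hpt : ∀ x, ((starRingEnd ℂ) (D x) * v x).re
      = ((starRingEnd ℂ) (deriv (deriv (v : ℝ → ℂ)) x) * v x).im - α x * ‖v x‖ ^ 2 :=
    fun x => pointwise_re lam (α x) _ _
  have h2int : Integrable (fun x => α x * ‖v x‖ ^ 2) := by
    have heq : (fun x => α x * ‖v x‖ ^ 2)
        = fun x => ((starRingEnd ℂ) (deriv (deriv (v : ℝ → ℂ)) x) * v x).im
            - ((starRingEnd ℂ) (D x) * v x).re :=
      funext fun x => by rw [hpt x]; ring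
    rw [heq]
    exact int1.im.sub hint0.re
  have hsplit : ∫ x, ((starRingEnd ℂ) (D x) * v x).re
      = (∫ x, ((starRingEnd ℂ) (deriv (deriv (v : ℝ → ℂ)) x) * v x).im)
        - ∫ x, α x * ‖v x‖ ^ 2 := by
    have int1im : Integrable
        (fun x => ((starRingEnd ℂ) (deriv (deriv (v : ℝ → ℂ)) x) * v x).im) := int1.im
    rw [← integral_sub int1im h2int]
    exact integral_congr_ae (Filter.Eventually.of_forall fun x => by simpa using hpt x)
  have hmono : a * ∫ x, ‖v x‖ ^ 2 ≤ ∫ x, α x * ‖v x‖ ^ 2 := by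
    rw [← integral_const_mul]
    exact integral_mono ((schwartz_norm_sq_integrable v).const_mul a) h2int
      (fun x => mul_le_mul_of_nonneg_right (hαa x) (sq_nonneg _))
  rw [hre, hsplit, h1, lp_norm_sq v Uv hUv]
  linarith

lemma gronwall_decay (g : ℝ → ℝ) (b : ℝ)
    (h : ∀ t : ℝ, 0 ≤ t → ∃ c, HasDerivAt g c t ∧ c ≤ -b * g t) :
    ∀ t : ℝ, 0 ≤ t → g t ≤ Real.exp (-b * t) * g 0 := by
  have hFd : ∀ s : ℝ, 0 ≤ s → ∃ c, HasDerivAt (fun r => Real.exp (b * r) * g r) c s ∧ c ≤ 0 := by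
    intro s hs
    obtain ⟨c, hc, hcle⟩ := h s hs
    refine ⟨b * Real.exp (b * s) * g s + Real.exp (b * s) * c, ?_, ?_⟩
    · have he : HasDerivAt (fun r : ℝ => Real.exp (b * r)) (b * Real.exp (b * s)) s := by
        convert ((hasDerivAt_id s).const_mul b).exp using 1 <;> simp [mul_comm]
      exact he.mul hc
    · have h2 := mul_le_mul_of_nonneg_left hcle (Real.exp_pos (b * s)).le
      nlinarith [Real.exp_pos (b * s)]
  have hanti : AntitoneOn (fun r => Real.exp (b * r) * g r) (Set.Ici (0 : ℝ)) := by
    apply antitoneOn_of_deriv_nonpos (convex_Ici 0)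
    · exact fun x hx => ((hFd x hx).choose_spec.1).continuousAt.continuousWithinAt
    · intro x hx
      rw [interior_Ici] at hx
      exact ((hFd x hx.le).choose_spec.1).differentiableAt.differentiableWithinAt
    · intro x hx
      rw [interior_Ici] at hx
      obtain ⟨c, hc, hcle⟩ := hFd x hx.le
      rw [hc.deriv]; exact hcle
  intro t ht
  have hFt : Real.exp (b * t) * g t ≤ g 0 := by
    simpa using hanti Set.self_mem_Ici ht ht
  have hE : Real.exp (-(b * t)) * Real.exp (b * t) = 1 := by
    rw [← Real.exp_add]; simp
  have key := mul_le_mul_of_nonneg_left hFt (Real.exp_pos (-(b * t))).le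
  rw [← mul_assoc, hE, one_mul] at key
  simpa [neg_mul] using key

/-- Exponential decay of the charge for the damped deterministic NLS
equation `du/dt = i u'' + iλ|u|²u − αu` with damping `α ≥ a > 0`, where the equation holds
in the `L²` sense (via an `L²` representative `U` of the curve): for all `t ≥ 0`,
`‖u(t)‖_{L²} ≤ e^{−at}‖u(0)‖_{L²}`. -/
theorem stmt18 (lam a : ℝ) (ha : 0 < a) (α : ℝ → ℝ)
    (hα : Function.HasTemperateGrowth α)
    (hαa : ∀ x : ℝ, a ≤ α x)
    (u : ℝ → SchwartzMap ℝ ℂ)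
    (U : ℝ → Lp ℂ 2 (volume : Measure ℝ))
    (hU : ∀ t : ℝ, 0 ≤ t → (U t : ℝ → ℂ) =ᵐ[volume] u t)
    (hderiv : ∀ t : ℝ, 0 ≤ t → ∃ d : Lp ℂ 2 (volume : Measure ℝ),
      HasDerivAt U d t ∧
        (d : ℝ → ℂ) =ᵐ[volume] fun x : ℝ =>
          Complex.I * deriv (deriv (u t)) x
            + Complex.I * (lam : ℂ) * ((‖u t x‖ ^ 2 : ℝ) : ℂ) * u t x
            - (α x : ℂ) * u t x) :
    ∀ t : ℝ, 0 ≤ t →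
      (∫ x : ℝ, ‖u t x‖ ^ 2) ^ ((1 : ℝ) / 2) ≤
        Real.exp (-a * t) * (∫ x : ℝ, ‖u 0 x‖ ^ 2) ^ ((1 : ℝ) / 2) := by
  have key : ∀ s : ℝ, 0 ≤ s →
      ∃ c, HasDerivAt (fun r => ‖U r‖ ^ 2) c s ∧ c ≤ -(2 * a) * ‖U s‖ ^ 2 := by
    intro s hs
    obtain ⟨d, hdU, hdae⟩ := hderiv s hs
    have hb : ((inner ℂ d (U s) : ℂ)).re ≤ -a * ‖U s‖ ^ 2 :=
      key_bound lam a α hα.1.continuous hαa (u s) d (U s) (hU s hs) hdae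
    have hI : HasDerivAt (fun r => (inner ℂ (U r) (U r) : ℂ))
        ((inner ℂ (U s) d : ℂ) + (inner ℂ d (U s) : ℂ)) s := hdU.inner ℂ hdU
    have hre : HasDerivAt (fun r => ((inner ℂ (U r) (U r) : ℂ)).re)
        (((inner ℂ (U s) d : ℂ) + (inner ℂ d (U s) : ℂ)).re) s :=
      Complex.reCLM.hasFDerivAt.comp_hasDerivAt s hI
    have hfun : (fun r => ((inner ℂ (U r) (U r) : ℂ)).re) = fun r => ‖U r‖ ^ 2 :=
      funext fun r => @inner_self_eq_norm_sq ℂ _ _ _ _ (U r)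
    rw [hfun] at hre
    refine ⟨_, hre, ?_⟩
    have h2 : (((inner ℂ (U s) d : ℂ) + (inner ℂ d (U s) : ℂ)).re)
        = 2 * ((inner ℂ d (U s) : ℂ)).re := by
      rw [← inner_conj_symm (𝕜 := ℂ) d (U s)]
      simp only [Complex.add_re, Complex.conj_re]
      ring
    rw [h2]
    linarith
  intro t ht
  have gron := gronwall_decay (fun r => ‖U r‖ ^ 2) (2 * a) key t ht
  rw [show (∫ x : ℝ, ‖u t x‖ ^ 2) = ‖U t‖ ^ 2 from (lp_norm_sq (u t) (U t) (hU t ht)).symm,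
    show (∫ x : ℝ, ‖u 0 x‖ ^ 2) = ‖U 0‖ ^ 2 from (lp_norm_sq (u 0) (U 0) (hU 0 le_rfl)).symm]
  have hrpow : ∀ r : ℝ, 0 ≤ r → (r ^ 2) ^ ((1 : ℝ) / 2) = r := by
    intro r hr
    rw [← Real.rpow_natCast r 2, ← Real.rpow_mul hr]
    norm_num
  rw [hrpow ‖U t‖ (norm_nonneg _), hrpow ‖U 0‖ (norm_nonneg _)]
  have e2 : Real.exp (-a * t) ^ 2 = Real.exp (-(2 * a) * t) := by
    rw [sq, ← Real.exp_add]; ring_nf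
  have hsq : ‖U t‖ ^ 2 ≤ (Real.exp (-a * t) * ‖U 0‖) ^ 2 := by
    rw [mul_pow, e2]; exact gron
  have := Real.sqrt_le_sqrt hsq
  rwa [Real.sqrt_sq (norm_nonneg _), Real.sqrt_sq (by positivity)] at this
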